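/- Let A, B be SPD with A having smallest eigenvalue λ₁ (simple) and eigenvector u*, and let x* = B^{1/2}u*/‖B^{1/2}u*‖. For f(x) = −(xᵀB⁻¹x)/(xᵀB^{-1/2}AB^{-1/2}x) one has, for any unit vector x: ∇f(x)ᵀx* = −(2λ₁ xᵀB⁻¹x*/‖A^{1/2}B^{-1/2}x‖²)·(f(x) − f(x*)), where f(x*) = −1/λ₁. -/

import Mathlib

open Matrix

theorem stmt_9 {n : ℕ} (A B S R : Matrix (Fin n) (Fin n) ℝ)
    (hA : A.PosDef) (hB : B.PosDef)
    (hS : S.PosDef) (hSB : S * S = B)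
    (hR : R.PosDef) (hRB : R * R = B⁻¹)
    (lam₁ : ℝ) (hlam₁ : 0 < lam₁)
    (hlam₁min : ∀ y : Fin n → ℝ, lam₁ * (y ⬝ᵥ y) ≤ y ⬝ᵥ A.mulVec y)
    (u : Fin n → ℝ) (hu : u ≠ 0) (hAu : A.mulVec u = lam₁ • u)
    (xstar : Fin n → ℝ)
    (hxstar : xstar = (Real.sqrt (u ⬝ᵥ B.mulVec u))⁻¹ • S.mulVec u)
    (x : Fin n → ℝ) (hx : x ⬝ᵥ x = 1)
    (f : ℝ) (hf : f = -(x ⬝ᵥ B⁻¹.mulVec x) / (x ⬝ᵥ (R * A * R).mulVec x))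
    (g : Fin n → ℝ)
    (hg : g = (-2 / (x ⬝ᵥ (R * A * R).mulVec x)) •
      (B⁻¹.mulVec x + f • (R * A * R).mulVec x)) :
    g ⬝ᵥ xstar =
      -(2 * lam₁ * (x ⬝ᵥ B⁻¹.mulVec xstar) / (x ⬝ᵥ (R * A * R).mulVec x)) *
        (f - (-1 / lam₁)) := by
  have hdot : ∀ (M : Matrix (Fin n) (Fin n) ℝ), Mᵀ = M → ∀ v w : Fin n → ℝ,
      (M *ᵥ v) ⬝ᵥ w = v ⬝ᵥ (M *ᵥ w) := fun M hM v w => by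
    rw [dotProduct_comm, dotProduct_mulVec, ← mulVec_transpose, hM, dotProduct_comm]
  -- R = S⁻¹
  have hSinv : (S⁻¹).PosDef := hS.inv
  have hRS' : R = S⁻¹ := by
    open scoped MatrixOrder in
    apply (CFC.sq_eq_sq_iff R S⁻¹ hR.posSemidef.nonneg hSinv.posSemidef.nonneg).mp
    rw [pow_two, pow_two, hRB, ← hSB, Matrix.mul_inv_rev]
  have hRS : R * S = 1 := by
    rw [hRS']
    exact Matrix.nonsing_inv_mul S (isUnit_iff_ne_zero.mpr hS.det_pos.ne')
  set c : ℝ := (Real.sqrt (u ⬝ᵥ B.mulVec u))⁻¹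
  -- key computations
  have h1 : B⁻¹ *ᵥ xstar = c • (R *ᵥ u) := by
    rw [hxstar, mulVec_smul, mulVec_mulVec, ← hRB, mul_assoc, hRS, mul_one]
  have h2 : (R * A * R) *ᵥ xstar = (lam₁ * c) • (R *ᵥ u) := by
    rw [hxstar, mulVec_smul, mulVec_mulVec, mul_assoc (R*A), hRS, mul_one,
      ← mulVec_mulVec, hAu, mulVec_smul, smul_smul, mul_comm]
  -- symmetry
  have hsym : ∀ M : Matrix (Fin n) (Fin n) ℝ, M.PosDef → Mᵀ = M := by
    intro M hM
    have := hM.isHermitian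
    simpa [Matrix.IsHermitian] using this
  have hBsym : (B⁻¹)ᵀ = B⁻¹ := by
    rw [Matrix.transpose_nonsing_inv, hsym B hB]
  have hRsym : Rᵀ = R := hsym R hR
  have hRARsym : (R * A * R)ᵀ = R * A * R := by
    rw [transpose_mul, transpose_mul, hRsym, hsym A hA, mul_assoc]
  have e1 : (B⁻¹ *ᵥ x) ⬝ᵥ xstar = x ⬝ᵥ B⁻¹ *ᵥ xstar := hdot _ hBsym x xstar
  have e2 : ((R * A * R) *ᵥ x) ⬝ᵥ xstar = lam₁ * (x ⬝ᵥ B⁻¹ *ᵥ xstar) := by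
    rw [hdot _ hRARsym x xstar, h2, h1, dotProduct_smul, dotProduct_smul,
      smul_eq_mul, smul_eq_mul]
    ring
  set D : ℝ := x ⬝ᵥ (R * A * R).mulVec x
  set q : ℝ := x ⬝ᵥ B⁻¹ *ᵥ xstar
  rw [hg, smul_dotProduct, add_dotProduct, smul_dotProduct, e1, e2, smul_eq_mul, smul_eq_mul]
  have hl : lam₁ ≠ 0 := hlam₁.ne'
  field_simp
  ring
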